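/- Let n ≥ 3 and let P_n be a regular n-gon, each of whose interior angles equals γ_n = π(n−2)/n. Then the sum over all n vertices of f(γ_n), where f(γ) = 1 + (π−γ)cot(γ), tends to 0 as n → ∞. -/

import Mathlib

open Real Filter Topology

lemma key_ratio_bound {x : ℝ} (hx : 0 < x) (hx1 : x ≤ 1) :
    |(Real.sin x - x * Real.cos x) / (x * Real.sin x)| ≤ x := by
  have h := Real.sin_gt_sub_cube hx
  have hx2 : x ^ 2 ≤ 1 := by nlinarith
  have hx3 : x ^ 3 ≤ x := by nlinarith
  have hsin : (3 * x / 4) ≤ Real.sin x := by nlinarith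
  have hsinpos : 0 < Real.sin x := lt_of_lt_of_le (by positivity) hsin
  have hcos : 1 - x ^ 2 / 2 ≤ Real.cos x := Real.one_sub_sq_div_two_le_cos
  have hcos1 : Real.cos x ≤ 1 := Real.cos_le_one x
  have hsinlt : Real.sin x ≤ x := (Real.sin_lt hx).le
  have hnum : |Real.sin x - x * Real.cos x| ≤ x ^ 3 / 2 := by
    rw [abs_le]
    constructor
    · nlinarith [mul_le_of_le_one_right hx.le hcos1]
    · nlinarith [mul_le_of_le_one_right hx.le hcos1]
  have hden : 3 * x ^ 2 / 4 ≤ x * Real.sin x := by nlinarith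
  have hdenpos : 0 < x * Real.sin x := by positivity
  rw [abs_div, abs_of_pos hdenpos, div_le_iff₀ hdenpos]
  calc |Real.sin x - x * Real.cos x| ≤ x ^ 3 / 2 := hnum
    _ ≤ x * (3 * x ^ 2 / 4) := by nlinarith
    _ ≤ x * (x * Real.sin x) := by nlinarith

/-- For regular `n`-gons with interior angles `γ_n = π(n-2)/n`, the total corner
contribution `n · f(γ_n)`, with `f(γ) = 1 + (π-γ)cot γ`, tends to `0` as `n → ∞`. -/
theorem regular_ngon_corner_sum_tendsto_zero :
    Tendsto (fun n : ℕ =>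
        (n : ℝ) * (1 + (π - π * ((n : ℝ) - 2) / n) *
          (Real.cos (π * ((n : ℝ) - 2) / n) / Real.sin (π * ((n : ℝ) - 2) / n))))
      atTop (𝓝 0) := by
  have hpi := Real.pi_pos
  apply squeeze_zero_norm' (a := fun n : ℕ => (2 * π * (2 * π)) / n)
  · filter_upwards [eventually_ge_atTop 7] with n hn
    have hn0 : (0 : ℝ) < n := by positivity
    set t : ℝ := 2 * π / n with ht
    have htpos : 0 < t := by positivity
    have ht1 : t ≤ 1 := by
      rw [ht, div_le_one hn0]
      have h7 : (7 : ℝ) ≤ n := by exact_mod_cast hn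
      nlinarith [Real.pi_lt_d2]
    have hγ : π * ((n : ℝ) - 2) / n = π - t := by
      rw [ht]; field_simp
    have hcos : Real.cos (π * ((n : ℝ) - 2) / n) = -Real.cos t := by
      rw [hγ, Real.cos_pi_sub]
    have hsin : Real.sin (π * ((n : ℝ) - 2) / n) = Real.sin t := by
      rw [hγ, Real.sin_pi_sub]
    have hπγ : π - π * ((n : ℝ) - 2) / n = t := by rw [hγ]; ring
    have hsinpos : 0 < Real.sin t := by
      have h := Real.sin_gt_sub_cube htpos
      have ht2 : t ^ 2 ≤ 1 := by nlinarith
      nlinarith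
    have heq : (n : ℝ) * (1 + (π - π * ((n : ℝ) - 2) / n) *
          (Real.cos (π * ((n : ℝ) - 2) / n) / Real.sin (π * ((n : ℝ) - 2) / n)))
        = 2 * π * ((Real.sin t - t * Real.cos t) / (t * Real.sin t)) := by
      rw [hcos, hsin, hπγ]
      have hnt : (n : ℝ) = 2 * π / t := by
        rw [ht]; field_simp
      rw [hnt]
      field_simp
      ring
    rw [heq, norm_mul, norm_eq_abs, norm_eq_abs, abs_of_pos (by positivity : (0:ℝ) < 2*π)]
    calc 2 * π * |(Real.sin t - t * Real.cos t) / (t * Real.sin t)|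
        ≤ 2 * π * t := by
          have := key_ratio_bound htpos ht1
          nlinarith
      _ = 2 * π * (2 * π) / n := by rw [ht]; ring
  · exact tendsto_const_div_atTop_nhds_zero_nat _
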